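/- arXiv:2109.04169 — 3 statements merged into one kernel-verified Lean document; each statement's English description precedes it below -/
import Mathlib

section
/- Let γ ≥ 2 and define H = (1/(4(1+γ)))(2γ|0⟩⟨0|⊗σ₀ + |1⟩⟨1|⊗σ₀ + σ₁⊗σ₁) on ℂ²⊗ℂ², where σ₀=I and σ₁=|0⟩⟨1|+|1⟩⟨0|. With η₀=η₁=γ/(2(1+γ)), η₊=η₋=1/(2(1+γ)), ρ₀=|00⟩⟨00|, ρ₁=|01⟩⟨01|, ρ₊=|+⟩⟨+|⊗|+⟩⟨+|, ρ₋=|−⟩⟨−|⊗|−⟩⟨−|, each operator H − ηᵢρᵢ can be written as a sum of positive semidefinite operators and partial transposes of positive semidefinite operators; consequently Tr((H−ηᵢρᵢ)B) ≥ 0 for every separable positive semidefinite B. -/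
open Matrix ComplexOrder
open scoped Kronecker

noncomputable section

abbrev M2 : Type := Matrix (Fin 2) (Fin 2) ℂ
abbrev M4 : Type := Matrix (Fin 2 × Fin 2) (Fin 2 × Fin 2) ℂ

/-- standard basis kets of ℂ² -/
def ket0 : Fin 2 → ℂ := ![1, 0]
def ket1 : Fin 2 → ℂ := ![0, 1]
/-- |+⟩ = (|0⟩+|1⟩)/√2 -/
def ketP : Fin 2 → ℂ := ![(((Real.sqrt 2)⁻¹ : ℝ) : ℂ), (((Real.sqrt 2)⁻¹ : ℝ) : ℂ)]
/-- |−⟩ = (|0⟩−|1⟩)/√2 -/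
def ketM : Fin 2 → ℂ := ![(((Real.sqrt 2)⁻¹ : ℝ) : ℂ), -(((Real.sqrt 2)⁻¹ : ℝ) : ℂ)]

/-- outer product |v⟩⟨w| -/
def outer {n : Type*} (v w : n → ℂ) : Matrix n n ℂ := Matrix.of fun i j => v i * star (w j)
/-- projector |v⟩⟨v| -/
def proj {n : Type*} (v : n → ℂ) : Matrix n n ℂ := outer v v

/-- tensor product of two qubit vectors -/
def kron2 (v w : Fin 2 → ℂ) : Fin 2 × Fin 2 → ℂ := fun p => v p.1 * w p.2

/-- partial transpose on the second tensor factor, in the standard basis -/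
def PT (A : M4) : M4 := Matrix.of fun p q => A (p.1, q.2) (q.1, p.2)

/-- separability: a sum of tensor products of positive semidefinite operators -/
def Separable (E : M4) : Prop :=
  ∃ (k : ℕ) (X Y : Fin k → M2),
    (∀ i, (X i).PosSemidef ∧ (Y i).PosSemidef) ∧ E = ∑ i, (X i) ⊗ₖ (Y i)

def σ0 : M2 := 1
def σ1 : M2 := !![0, 1; 1, 0]
def σ2 : M2 := !![0, -Complex.I; Complex.I, 0]

/-- Example 1 states -/
def ρ00 : M4 := proj ket0 ⊗ₖ proj ket0
def ρ01 : M4 := proj ket0 ⊗ₖ proj ket1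
def ρPP : M4 := proj ketP ⊗ₖ proj ketP
def ρMM : M4 := proj ketM ⊗ₖ proj ketM
/-- prior probabilities η₀ = η₁ = γ/(2(1+γ)) -/
def η01 (γ : ℝ) : ℝ := γ / (2 * (1 + γ))
/-- prior probabilities η₊ = η₋ = 1/(2(1+γ)) -/
def ηPM (γ : ℝ) : ℝ := 1 / (2 * (1 + γ))

/-- H = (1/(4(1+γ)))(2γ|0⟩⟨0|⊗σ₀ + |1⟩⟨1|⊗σ₀ + σ₁⊗σ₁) -/
def Hop (γ : ℝ) : M4 :=
  (((4 * (1 + γ))⁻¹ : ℝ) : ℂ) •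
    ((2 * (γ : ℂ)) • (proj ket0 ⊗ₖ σ0) + proj ket1 ⊗ₖ σ0 + σ1 ⊗ₖ σ1)

def ηvec (γ : ℝ) : Fin 4 → ℝ := ![η01 γ, η01 γ, ηPM γ, ηPM γ]
def ρvec : Fin 4 → M4 := ![ρ00, ρ01, ρPP, ρMM]

lemma posSemidef_proj {n : Type*} [Fintype n] (v : n → ℂ) : (proj v).PosSemidef := by
  have h : proj v = (Matrix.of (fun (_ : Fin 1) j => star (v j)))ᴴ *
      (Matrix.of fun (_ : Fin 1) j => star (v j)) := by
    ext i j
    simp [proj, outer, Matrix.mul_apply, Matrix.conjTranspose_apply]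
  rw [h]
  exact Matrix.posSemidef_conjTranspose_mul_self _

lemma posSemidef_smul {r : ℝ} (hr : 0 ≤ r) {n : Type*} [Fintype n] {A : Matrix n n ℂ}
    (hA : A.PosSemidef) : ((r : ℂ) • A).PosSemidef := by
  constructor
  · rw [Matrix.IsHermitian, Matrix.conjTranspose_smul, hA.1]
    simp [Complex.star_def, Complex.conj_ofReal]
  · intro x
    exact (hA.smul (a := (r : ℂ)) (by exact_mod_cast hr)).2 x

lemma trace_nonneg_of_psd {n : Type*} [Fintype n] [DecidableEq n] {A : Matrix n n ℂ}
    (hA : A.PosSemidef) : 0 ≤ A.trace := by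
  exact hA.trace_nonneg

lemma trace_mul_nonneg {n : Type*} [Fintype n] [DecidableEq n] {A B : Matrix n n ℂ}
    (hA : A.PosSemidef) (hB : B.PosSemidef) : 0 ≤ (A * B).trace := by
  open scoped MatrixOrder in
  obtain ⟨C, rfl⟩ := CStarAlgebra.nonneg_iff_eq_star_mul_self.mp hA.nonneg
  have h : (star C * C * B).trace = (C * B * Cᴴ).trace := by
    rw [Matrix.star_eq_conjTranspose, Matrix.trace_mul_cycle, Matrix.mul_assoc,
      ← Matrix.mul_assoc, Matrix.trace_mul_comm, Matrix.mul_assoc]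
  rw [h]
  exact trace_nonneg_of_psd (hB.mul_mul_conjTranspose_same _)

lemma PT_trace (Q B : M4) : (PT Q * B).trace = (Q * PT B).trace := by
  simp only [Matrix.trace, Matrix.diag, Matrix.mul_apply, PT, Matrix.of_apply,
    Fintype.sum_prod_type, Fin.sum_univ_succ, Finset.sum_empty, Fin.sum_univ_zero]
  ring

lemma PT_kron (X Y : M2) : PT (X ⊗ₖ Y) = X ⊗ₖ Yᵀ := by
  ext ⟨i,j⟩ ⟨k,l⟩
  simp [PT, Matrix.kroneckerMap_apply]

lemma posSemidef_kron {X Y : M2} (hX : X.PosSemidef) (hY : Y.PosSemidef) :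
    (X ⊗ₖ Y).PosSemidef := by
  exact hX.kronecker hY

lemma PT_sum {k : ℕ} (f : Fin k → M4) : PT (∑ i, f i) = ∑ i, PT (f i) := by
  ext p q
  simp [PT, Matrix.sum_apply]

lemma posSemidef_sum {k : ℕ} (f : Fin k → M4) (h : ∀ i, (f i).PosSemidef) :
    (∑ i, f i).PosSemidef := by
  induction k with
  | zero => simpa using Matrix.PosSemidef.zero
  | succ m ih =>
    rw [Fin.sum_univ_succ]
    exact (h 0).add (ih _ fun i => h i.succ)

lemma sep_nonneg {E : M4} (h : ∃ P Q : M4, P.PosSemidef ∧ Q.PosSemidef ∧ E = P + PT Q) :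
    ∀ B : M4, Separable B → 0 ≤ (E * B).trace := by
  rintro B ⟨k, X, Y, hXY, rfl⟩
  obtain ⟨P, Q, hP, hQ, rfl⟩ := h
  have hB : (∑ i, X i ⊗ₖ Y i).PosSemidef :=
    posSemidef_sum _ fun i => posSemidef_kron (hXY i).1 (hXY i).2
  have hPTB : (PT (∑ i, X i ⊗ₖ Y i)).PosSemidef := by
    rw [PT_sum]
    refine _root_.posSemidef_sum _ fun i => ?_
    rw [PT_kron]
    exact posSemidef_kron (hXY i).1 (hXY i).2.transpose
  rw [Matrix.add_mul, Matrix.trace_add, PT_trace]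
  exact add_nonneg (trace_mul_nonneg hP hB) (trace_mul_nonneg hQ hPTB)

/-- vector on ℂ²⊗ℂ² with given coordinates -/
def vec4 (a b c d : ℂ) : Fin 2 × Fin 2 → ℂ := fun p => ![![a, b], ![c, d]] p.1 p.2

lemma sqrt2_inv_mul : ((Real.sqrt 2)⁻¹ * (Real.sqrt 2)⁻¹ : ℝ) = 1/2 := by
  rw [← mul_inv, Real.mul_self_sqrt] <;> norm_num

lemma rhoPP_eq : ρPP = (4⁻¹ : ℂ) • proj (vec4 1 1 1 1) := by
  ext ⟨a,b⟩ ⟨e,f⟩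
  fin_cases a <;> fin_cases b <;> fin_cases e <;> fin_cases f <;>
    simp [ρPP, proj, outer, ketP, vec4, Complex.star_def, Complex.conj_ofReal] <;>
    norm_cast <;> rw [show ((Real.sqrt 2)⁻¹ * (Real.sqrt 2)⁻¹ * ((Real.sqrt 2)⁻¹ * (Real.sqrt 2)⁻¹) : ℝ) = (1/2) * (1/2) by rw [sqrt2_inv_mul]] <;> norm_num

lemma rhoMM_eq : ρMM = (4⁻¹ : ℂ) • proj (vec4 1 (-1) (-1) 1) := by
  ext ⟨a,b⟩ ⟨e,f⟩
  fin_cases a <;> fin_cases b <;> fin_cases e <;> fin_cases f <;>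
    simp [ρMM, proj, outer, ketM, vec4, Complex.star_def, Complex.conj_ofReal] <;>
    norm_cast <;> rw [show ((Real.sqrt 2)⁻¹ * (Real.sqrt 2)⁻¹ * ((Real.sqrt 2)⁻¹ * (Real.sqrt 2)⁻¹) : ℝ) = (1/2) * (1/2) by rw [sqrt2_inv_mul]] <;> norm_num

set_option maxHeartbeats 4000000 in
/-- each H − ηᵢρᵢ is a sum of a PSD operator and the partial transpose of
a PSD operator; consequently Tr((H−ηᵢρᵢ)B) ≥ 0 for every separable PSD B. -/
theorem stmt_5 (γ : ℝ) (hγ : 2 ≤ γ) :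
    ∀ i : Fin 4,
      (∃ P Q : M4, P.PosSemidef ∧ Q.PosSemidef ∧
          Hop γ - (ηvec γ i : ℂ) • ρvec i = P + PT Q)
      ∧ ∀ B : M4, Separable B →
          0 ≤ ((Hop γ - (ηvec γ i : ℂ) • ρvec i) * B).trace := by
  suffices h : ∀ i : Fin 4, ∃ P Q : M4, P.PosSemidef ∧ Q.PosSemidef ∧
      Hop γ - (ηvec γ i : ℂ) • ρvec i = P + PT Q by
    exact fun i => ⟨h i, sep_nonneg (h i)⟩
  have h1γ : (0:ℝ) < 1 + γ := by linarith
  have hc : (0:ℝ) ≤ (4 * (1 + γ))⁻¹ := by positivity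
  have hne : (1:ℂ) + (γ:ℂ) ≠ 0 := by
    exact_mod_cast Complex.ofReal_ne_zero.mpr (ne_of_gt h1γ)
  have h24 : (0:ℝ) ≤ 2*γ - 4 := by linarith
  have h21 : (0:ℝ) ≤ 2*γ - 1 := by linarith
  have hhalf : (0:ℝ) ≤ (1/2 : ℝ) := by norm_num
  intro i
  fin_cases i
  · -- i = 0
    refine ⟨(((4 * (1 + γ))⁻¹:ℝ):ℂ) • (((2*γ-4 : ℝ):ℂ) • proj (vec4 0 1 0 0) +
        ((2:ℝ):ℂ) • proj (vec4 0 1 (1/2) 0) + proj (vec4 0 0 0 1)),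
      (((4 * (1 + γ))⁻¹:ℝ):ℂ) • (((2:ℝ):ℂ) • proj (vec4 0 1 (1/2) 0)), ?_, ?_, ?_⟩
    · exact posSemidef_smul hc (((posSemidef_smul h24 (posSemidef_proj _)).add
        (posSemidef_smul (by norm_num) (posSemidef_proj _))).add (posSemidef_proj _))
    · exact posSemidef_smul hc (posSemidef_smul (by norm_num) (posSemidef_proj _))
    · ext ⟨a,b⟩ ⟨e,f⟩
      fin_cases a <;> fin_cases b <;> fin_cases e <;> fin_cases f <;>
        simp [Hop, ηvec, ρvec, ρ00, η01, proj, outer, ket0, ket1, σ0, σ1, PT, vec4,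
            Matrix.kroneckerMap_apply, Matrix.one_apply, Complex.star_def, map_ofNat,
            map_div₀, map_inv₀] <;>
        (try push_cast) <;> (try field_simp) <;> (try ring)
  · -- i = 1
    refine ⟨(((4 * (1 + γ))⁻¹:ℝ):ℂ) • (((2*γ-4 : ℝ):ℂ) • proj (vec4 1 0 0 0) +
        ((2:ℝ):ℂ) • proj (vec4 1 0 0 (1/2)) + proj (vec4 0 0 1 0)),
      (((4 * (1 + γ))⁻¹:ℝ):ℂ) • (((2:ℝ):ℂ) • proj (vec4 1 0 0 (1/2))), ?_, ?_, ?_⟩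
    · exact posSemidef_smul hc (((posSemidef_smul h24 (posSemidef_proj _)).add
        (posSemidef_smul (by norm_num) (posSemidef_proj _))).add (posSemidef_proj _))
    · exact posSemidef_smul hc (posSemidef_smul (by norm_num) (posSemidef_proj _))
    · ext ⟨a,b⟩ ⟨e,f⟩
      fin_cases a <;> fin_cases b <;> fin_cases e <;> fin_cases f <;>
        simp [Hop, ηvec, ρvec, ρ01, η01, proj, outer, ket0, ket1, σ0, σ1, PT, vec4,
            Matrix.kroneckerMap_apply, Matrix.one_apply, Complex.star_def, map_ofNat,
            map_div₀, map_inv₀] <;>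
        (try push_cast) <;> (try field_simp) <;> (try ring)
  · -- i = 2
    refine ⟨(((4 * (1 + γ))⁻¹:ℝ):ℂ) • (((2*γ-1 : ℝ):ℂ) • proj (vec4 1 0 0 0) +
        ((2*γ-1 : ℝ):ℂ) • proj (vec4 0 1 0 0) + ((1/2 : ℝ):ℂ) • proj (vec4 (-1) 1 1 (-1))),
      0, ?_, Matrix.PosSemidef.zero, ?_⟩
    · exact posSemidef_smul hc (((posSemidef_smul h21 (posSemidef_proj _)).add
        (posSemidef_smul h21 (posSemidef_proj _))).add (posSemidef_smul hhalf (posSemidef_proj _)))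
    · ext ⟨a,b⟩ ⟨e,f⟩
      fin_cases a <;> fin_cases b <;> fin_cases e <;> fin_cases f <;>
        simp [Hop, ηvec, ρvec, rhoPP_eq, ηPM, proj, outer, ket0, ket1, σ0, σ1, PT, vec4,
            Matrix.kroneckerMap_apply, Matrix.one_apply, Complex.star_def, map_ofNat,
            map_div₀, map_inv₀] <;>
        (try push_cast) <;> (try field_simp) <;> (try ring)
  · -- i = 3
    refine ⟨(((4 * (1 + γ))⁻¹:ℝ):ℂ) • (((2*γ-1 : ℝ):ℂ) • proj (vec4 1 0 0 0) +
        ((2*γ-1 : ℝ):ℂ) • proj (vec4 0 1 0 0) + ((1/2 : ℝ):ℂ) • proj (vec4 1 1 1 1)),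
      0, ?_, Matrix.PosSemidef.zero, ?_⟩
    · exact posSemidef_smul hc (((posSemidef_smul h21 (posSemidef_proj _)).add
        (posSemidef_smul h21 (posSemidef_proj _))).add (posSemidef_smul hhalf (posSemidef_proj _)))
    · ext ⟨a,b⟩ ⟨e,f⟩
      fin_cases a <;> fin_cases b <;> fin_cases e <;> fin_cases f <;>
        simp [Hop, ηvec, ρvec, rhoMM_eq, ηPM, proj, outer, ket0, ket1, σ0, σ1, PT, vec4,
            Matrix.kroneckerMap_apply, Matrix.one_apply, Complex.star_def, map_ofNat,
            map_div₀, map_inv₀] <;>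
        (try push_cast) <;> (try field_simp) <;> (try ring)
end
end

section
/- For γ ≥ 2, the Hermitian operator ρ̃₍₀,₊₎ − ρ̃₍₁,₋₎ on ℂ²⊗ℂ², where ρ̃₍₀,₊₎ = (γ/(1+γ))|00⟩⟨00| + (1/(1+γ))|+⟩⟨+|⊗|+⟩⟨+| and ρ̃₍₁,₋₎ = (γ/(1+γ))|01⟩⟨01| + (1/(1+γ))|+⟩⟨+|⊗|−⟩⟨−|, has exactly the four eigenvalues λ₊, λ₋, −λ₊, −λ₋ with λ± = (√(1+γ+γ²) ± √(1−γ+γ²))/(2(1+γ)). -/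
open Matrix ComplexOrder
open scoped Kronecker

noncomputable section

/-- Example 2 states (ρ₀, ρ₁, ρ₊ as in Example 1; ρ₋ = |+⟩⟨+|⊗|−⟩⟨−|) -/
def ρ00' : M4 := proj ket0 ⊗ₖ proj ket0
def ρ01' : M4 := proj ket0 ⊗ₖ proj ket1
def ρPP' : M4 := proj ketP ⊗ₖ proj ketP
def ρPM' : M4 := proj ketP ⊗ₖ proj ketM

/-- average states ρ̃₍b,±₎ = (γ/(1+γ))|0⟩⟨0|⊗|b⟩⟨b| + (1/(1+γ))|+⟩⟨+|⊗|±⟩⟨±| -/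
def rt0p (γ : ℝ) : M4 :=
  ((γ / (1 + γ) : ℝ) : ℂ) • (proj ket0 ⊗ₖ proj ket0)
    + ((1 / (1 + γ) : ℝ) : ℂ) • (proj ketP ⊗ₖ proj ketP)
def rt0m (γ : ℝ) : M4 :=
  ((γ / (1 + γ) : ℝ) : ℂ) • (proj ket0 ⊗ₖ proj ket0)
    + ((1 / (1 + γ) : ℝ) : ℂ) • (proj ketP ⊗ₖ proj ketM)
def rt1p (γ : ℝ) : M4 :=
  ((γ / (1 + γ) : ℝ) : ℂ) • (proj ket0 ⊗ₖ proj ket1)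
    + ((1 / (1 + γ) : ℝ) : ℂ) • (proj ketP ⊗ₖ proj ketP)
def rt1m (γ : ℝ) : M4 :=
  ((γ / (1 + γ) : ℝ) : ℂ) • (proj ket0 ⊗ₖ proj ket1)
    + ((1 / (1 + γ) : ℝ) : ℂ) • (proj ketP ⊗ₖ proj ketM)


open Polynomial in
lemma my_charpoly_conj {n : Type*} [Fintype n] [DecidableEq n]
    (U : Matrix.unitaryGroup n ℂ) (D : Matrix n n ℂ) :
    ((U : Matrix n n ℂ) * D * star (U : Matrix n n ℂ)).charpoly = D.charpoly := by
  unfold Matrix.charpoly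
  have hUU : (U : Matrix n n ℂ) * (star (U : Matrix n n ℂ)) = 1 :=
    (Matrix.mem_unitaryGroup_iff).mp U.2
  have hUU' : (star (U : Matrix n n ℂ)) * (U : Matrix n n ℂ) = 1 :=
    (Matrix.mem_unitaryGroup_iff').mp U.2
  have h1 : charmatrix ((U : Matrix n n ℂ) * D * star (U : Matrix n n ℂ))
      = (C : ℂ →+* ℂ[X]).mapMatrix (U : Matrix n n ℂ) * charmatrix D
        * (C : ℂ →+* ℂ[X]).mapMatrix (star (U : Matrix n n ℂ)) := by
    simp only [charmatrix, mul_sub, sub_mul, RingHom.map_mul]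
    congr 1
    rw [show (C : ℂ →+* ℂ[X]).mapMatrix (U : Matrix n n ℂ) * (scalar n) X
        = (scalar n) X * (C : ℂ →+* ℂ[X]).mapMatrix (U : Matrix n n ℂ) from
      (scalar_commute X (fun r => Commute.all _ _) _).symm]
    rw [mul_assoc, ← RingHom.map_mul, hUU]
    simp
  rw [h1, det_mul, det_mul, mul_comm, ← mul_assoc, ← det_mul, ← RingHom.map_mul, hUU']
  simp

open Polynomial in
lemma my_charpoly_diagonal {n : Type*} [Fintype n] [DecidableEq n] (d : n → ℂ) :
    (Matrix.diagonal d).charpoly = ∏ i, (X - C (d i)) := by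
  have : charmatrix (Matrix.diagonal d) = Matrix.diagonal (fun i => X - C (d i)) := by
    ext i j
    by_cases h : i = j
    · subst h; simp
    · simp [h, charmatrix_apply_ne _ _ _ h, Matrix.diagonal_apply_ne _ h]
  rw [Matrix.charpoly, this, det_diagonal]

open Polynomial in
lemma my_herm_charpoly {n : Type*} [Fintype n] [DecidableEq n] {A : Matrix n n ℂ}
    (hA : A.IsHermitian) :
    A.charpoly = ∏ i, (X - C ((hA.eigenvalues i : ℝ) : ℂ)) := by
  conv_lhs => rw [hA.spectral_theorem]
  rw [Unitary.conjStarAlgAut_apply, my_charpoly_conj, my_charpoly_diagonal]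
  rfl

lemma halfC : ((Real.sqrt 2 : ℝ) : ℂ)⁻¹ * ((Real.sqrt 2 : ℝ) : ℂ)⁻¹ = 2⁻¹ := by
  rw [← mul_inv, ← Complex.ofReal_mul, Real.mul_self_sqrt (by norm_num)]
  norm_num

lemma projP_eq : proj ketP = !![(1/2 : ℂ), 1/2; 1/2, 1/2] := by
  ext i j
  fin_cases i <;> fin_cases j <;> simp [proj, outer, ketP, halfC]

lemma projM_eq : proj ketM = !![(1/2 : ℂ), -(1/2); -(1/2), 1/2] := by
  ext i j
  fin_cases i <;> fin_cases j <;>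
    simp [proj, outer, ketM, mul_neg, neg_mul, star_neg, neg_neg, halfC]

lemma proj0_eq : proj ket0 = !![(1 : ℂ), 0; 0, 0] := by
  ext i j
  fin_cases i <;> fin_cases j <;> simp [proj, outer, ket0]

lemma proj1_eq : proj ket1 = !![(0 : ℂ), 0; 0, 1] := by
  ext i j
  fin_cases i <;> fin_cases j <;> simp [proj, outer, ket1]

/-- The explicit 4×4 matrix. -/
def Bmat (a c : ℝ) : Matrix (Fin 4) (Fin 4) ℂ :=
  !![(a : ℂ), c, 0, c; c, -a, c, 0; 0, c, 0, c; c, 0, c, 0]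

lemma Bmat_herm (a c : ℝ) : (Bmat a c).IsHermitian := by
  show (Bmat a c)ᴴ = Bmat a c
  ext i j
  fin_cases i <;> fin_cases j <;>
    simp [Bmat, Matrix.conjTranspose_apply, Complex.conj_ofReal]

lemma vA0 : ((0 : Fin (2*2)) : ℕ) = 0 := rfl
lemma vA1 : ((1 : Fin (2*2)) : ℕ) = 1 := rfl
lemma vA2 : ((2 : Fin (2*2)) : ℕ) = 2 := rfl
lemma vA3 : ((3 : Fin (2*2)) : ℕ) = 3 := rfl

lemma A_reindex (γ : ℝ) :
    reindex finProdFinEquiv finProdFinEquiv (rt0p γ - rt1m γ)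
      = Bmat (γ / (1 + γ)) (1 / (2 * (1 + γ))) := by
  ext i j
  fin_cases i <;> fin_cases j <;>
    simp [rt0p, rt1m, Bmat, proj0_eq, proj1_eq, projP_eq, projM_eq,
        Matrix.kroneckerMap_apply, Matrix.submatrix_apply, finProdFinEquiv,
        Fin.divNat, Fin.modNat, vA0, vA1, vA2, vA3] <;>
    (push_cast; ring)

open Polynomial in
lemma Bmat_charpoly (a c : ℝ) :
    (Bmat a c).charpoly
      = X ^ 4 - C (((a ^ 2 + 4 * c ^ 2 : ℝ)) : ℂ) * X ^ 2 + C (((a ^ 2 * c ^ 2 : ℝ)) : ℂ) := by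
  have hcm : charmatrix (Bmat a c) =
      !![X - C (a:ℂ), -C (c:ℂ), 0, -C (c:ℂ);
         -C (c:ℂ), X + C (a:ℂ), -C (c:ℂ), 0;
         0, -C (c:ℂ), X, -C (c:ℂ);
         -C (c:ℂ), 0, -C (c:ℂ), X] := by
    ext i j
    fin_cases i <;> fin_cases j <;>
      simp [Bmat, charmatrix_apply, Matrix.diagonal_apply] <;> ring
  rw [Matrix.charpoly, hcm]
  simp [Matrix.det_succ_row_zero, Fin.sum_univ_succ, Fin.succAbove, Fin.castSucc,
    Fin.castAdd, Fin.castLE]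
  push_cast [map_ofNat]
  try ring

open Polynomial in
lemma prod4 (z1 z2 : ℂ) :
    (X - C z1) * ((X - C z2) * ((X - C (-z1)) * (X - C (-z2))))
      = X ^ 4 - C (z1 ^ 2 + z2 ^ 2) * X ^ 2 + C (z1 ^ 2 * z2 ^ 2) := by
  simp only [map_neg, map_add, _root_.map_mul, map_pow, Polynomial.C_add,
    Polynomial.C_mul, Polynomial.C_pow, Polynomial.C_neg]
  ring

/-- the eigenvalues of ρ̃₍₀,₊₎ − ρ̃₍₁,₋₎ are exactly λ₊, λ₋, −λ₊, −λ₋,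
each with multiplicity one, where λ± = (√(1+γ+γ²) ± √(1−γ+γ²))/(2(1+γ)). -/
theorem stmt_11 (γ : ℝ) (hγ : 2 ≤ γ) :
    ∃ h : (rt0p γ - rt1m γ).IsHermitian,
      Multiset.map h.eigenvalues Finset.univ.val =
        {(Real.sqrt (1 + γ + γ^2) + Real.sqrt (1 - γ + γ^2)) / (2 * (1 + γ)),
         (Real.sqrt (1 + γ + γ^2) - Real.sqrt (1 - γ + γ^2)) / (2 * (1 + γ)),
         -((Real.sqrt (1 + γ + γ^2) + Real.sqrt (1 - γ + γ^2)) / (2 * (1 + γ))),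
         -((Real.sqrt (1 + γ + γ^2) - Real.sqrt (1 - γ + γ^2)) / (2 * (1 + γ)))} := by
  classical
  have h1 : (0:ℝ) < 1 + γ := by linarith
  have hs : Real.sqrt (1 + γ + γ ^ 2) ^ 2 = 1 + γ + γ ^ 2 :=
    Real.sq_sqrt (by nlinarith)
  have ht : Real.sqrt (1 - γ + γ ^ 2) ^ 2 = 1 - γ + γ ^ 2 :=
    Real.sq_sqrt (by nlinarith)
  set s := Real.sqrt (1 + γ + γ ^ 2) with hsdef
  set t := Real.sqrt (1 - γ + γ ^ 2) with htdef
  set a : ℝ := γ / (1 + γ) with hadef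
  set c : ℝ := 1 / (2 * (1 + γ)) with hcdef
  set lp : ℝ := (s + t) / (2 * (1 + γ)) with hlpdef
  set lm : ℝ := (s - t) / (2 * (1 + γ)) with hlmdef
  have key1 : lp ^ 2 + lm ^ 2 = a ^ 2 + 4 * c ^ 2 := by
    rw [hlpdef, hlmdef, hadef, hcdef]
    field_simp
    linear_combination 2 * hs + 2 * ht
  have key2 : lp * lm = a * c := by
    rw [hlpdef, hlmdef, hadef, hcdef]
    field_simp
    linear_combination hs - ht
  have key3 : lp ^ 2 * lm ^ 2 = a ^ 2 * c ^ 2 := by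
    have : (lp * lm) ^ 2 = (a * c) ^ 2 := by rw [key2]
    nlinarith [this]
  -- the matrix, reindexed
  have hAB : rt0p γ - rt1m γ
      = (reindex finProdFinEquiv finProdFinEquiv).symm (Bmat a c) := by
    rw [← A_reindex γ]
    simp
  have hherm : (rt0p γ - rt1m γ).IsHermitian := by
    rw [hAB]
    have hb := Bmat_herm a c
    rw [Matrix.reindex_symm, Matrix.reindex_apply]
    exact hb.submatrix _
  refine ⟨hherm, ?_⟩
  -- characteristic polynomial computed two ways
  have hcp1 : (rt0p γ - rt1m γ).charpoly = (Bmat a c).charpoly := by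
    conv_lhs => rw [hAB]
    rw [Matrix.reindex_symm]
    exact Matrix.charpoly_reindex _ _
  have hcp2 := my_herm_charpoly hherm
  -- two multisets of complex numbers
  set m1 : Multiset ℂ :=
    Multiset.map (fun i => ((hherm.eigenvalues i : ℝ) : ℂ)) Finset.univ.val with hm1
  set m2 : Multiset ℂ := {((lp : ℝ) : ℂ), ((lm : ℝ) : ℂ), -((lp : ℝ) : ℂ), -((lm : ℝ) : ℂ)}
    with hm2
  have hprod1 : (rt0p γ - rt1m γ).charpoly
      = (m1.map (fun z => Polynomial.X - Polynomial.C z)).prod := by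
    rw [hcp2, hm1, Multiset.map_map, Finset.prod]
    rfl
  have hprod2 : (rt0p γ - rt1m γ).charpoly
      = (m2.map (fun z => Polynomial.X - Polynomial.C z)).prod := by
    rw [hcp1, Bmat_charpoly, hm2]
    have : ({((lp : ℝ) : ℂ), ((lm : ℝ) : ℂ), -((lp : ℝ) : ℂ), -((lm : ℝ) : ℂ)} :
        Multiset ℂ).map (fun z => Polynomial.X - Polynomial.C z)
        = {Polynomial.X - Polynomial.C ((lp : ℝ) : ℂ),
           Polynomial.X - Polynomial.C ((lm : ℝ) : ℂ),
           Polynomial.X - Polynomial.C (-((lp : ℝ) : ℂ)),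
           Polynomial.X - Polynomial.C (-((lm : ℝ) : ℂ))} := by
      rfl
    rw [this]
    show _ = (Polynomial.X - Polynomial.C ((lp : ℝ) : ℂ)) *
      ((Polynomial.X - Polynomial.C ((lm : ℝ) : ℂ)) *
        ((Polynomial.X - Polynomial.C (-((lp : ℝ) : ℂ))) *
          ((Polynomial.X - Polynomial.C (-((lm : ℝ) : ℂ))) * 1)))
    rw [mul_one, prod4]
    have e1 : ((lp : ℝ) : ℂ) ^ 2 + ((lm : ℝ) : ℂ) ^ 2 = (((a ^ 2 + 4 * c ^ 2 : ℝ)) : ℂ) := by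
      rw [← Complex.ofReal_pow, ← Complex.ofReal_pow, ← Complex.ofReal_add, key1]
    have e2 : ((lp : ℝ) : ℂ) ^ 2 * ((lm : ℝ) : ℂ) ^ 2 = (((a ^ 2 * c ^ 2 : ℝ)) : ℂ) := by
      rw [← Complex.ofReal_pow, ← Complex.ofReal_pow, ← Complex.ofReal_mul, key3]
    rw [e1, e2]
  have hroots : m1 = m2 := by
    have e1 := congrArg Polynomial.roots (hprod1.symm.trans hprod2)
    rwa [Polynomial.roots_multiset_prod_X_sub_C, Polynomial.roots_multiset_prod_X_sub_C] at e1
  -- descend from ℂ to ℝ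
  have hinj : Multiset.map hherm.eigenvalues Finset.univ.val
      = ({lp, lm, -lp, -lm} : Multiset ℝ) := by
    apply Multiset.map_injective Complex.ofReal_injective
    rw [Multiset.map_map]
    calc Multiset.map (Complex.ofReal ∘ hherm.eigenvalues) Finset.univ.val
        = m1 := rfl
      _ = m2 := hroots
      _ = Multiset.map Complex.ofReal {lp, lm, -lp, -lm} := by rw [hm2]; simp
  rw [hinj]
end
end

section
/- Let γ ≥ 2 and consider the four equiprobable average states ρ̃₍₀,±₎, ρ̃₍₁,±₎ (probabilities 1/4 each) defined by ρ̃₍b,±₎ = (γ/(1+γ))|0⟩⟨0|⊗|b⟩⟨b| + (1/(1+γ))|+⟩⟨+|⊗|±⟩⟨±|. Let Π₍₀,₊₎ (resp. Π₍₁,₋₎) be the projections onto positive (resp. negative) eigenspaces of ρ̃₍₀,₊₎ − ρ̃₍₁,₋₎, and Π₍₁,₊₎, Π₍₀,₋₎ those of ρ̃₍₁,₊₎ − ρ̃₍₀,₋₎. Then the POVM Mω = (1/2)Πω achieves ∑_ω (1/4)Tr(ρ̃ω Mω) = (1/4)(1 + √(1+γ+γ²)/(1+γ)). -/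
open Matrix ComplexOrder
open scoped Kronecker

noncomputable section

/-- `IsSpectralPair A P N` : P and N are the orthogonal projections onto the positive and
negative eigenspaces of the Hermitian operator A (whose eigenvalues are all nonzero, so
that P + N = 1). -/
def IsSpectralPair (A P N : M4) : Prop :=
  P.IsHermitian ∧ N.IsHermitian ∧ P * P = P ∧ N * N = N ∧ P + N = 1
    ∧ P * A = A * P ∧ (A * P).PosSemidef ∧ ((-A) * N).PosSemidef
    ∧ ∀ v : Fin 2 × Fin 2 → ℂ, A *ᵥ v = 0 → P *ᵥ v = 0

set_option maxHeartbeats 2000000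

def Bm (t : ℝ) : M4 := Matrix.of fun p q =>
  ![![![![(t:ℂ), 1/2], ![0, 1/2]],
     ![![1/2, -(t:ℂ)], ![1/2, 0]]],
    ![![![0, 1/2], ![0, 1/2]],
     ![![1/2, 0], ![1/2, 0]]]] p.1 p.2 q.1 q.2

lemma sq2 : ((Real.sqrt 2)⁻¹ : ℝ) * (Real.sqrt 2)⁻¹ = 1/2 := by
  rw [← mul_inv, Real.mul_self_sqrt (by norm_num)]; norm_num

lemma sq2c : (((Real.sqrt 2)⁻¹ : ℝ) : ℂ) * (((Real.sqrt 2)⁻¹ : ℝ) : ℂ) = 1/2 := by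
  rw [show (((Real.sqrt 2)⁻¹:ℝ):ℂ) * (((Real.sqrt 2)⁻¹:ℝ):ℂ)
      = (((Real.sqrt 2)⁻¹ * (Real.sqrt 2)⁻¹ : ℝ):ℂ) by push_cast; ring, sq2]
  norm_num

lemma sq2c' : (((Real.sqrt 2 : ℝ)) : ℂ)⁻¹ * (((Real.sqrt 2 : ℝ)) : ℂ)⁻¹ = 1/2 := by
  rw [show ((Real.sqrt 2:ℝ):ℂ)⁻¹ = (((Real.sqrt 2)⁻¹ : ℝ):ℂ) by push_cast; ring]
  exact sq2c

lemma c2 : (((Real.sqrt 2 : ℝ)) : ℂ)^2 = 2 := by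
  rw [show ((Real.sqrt 2:ℝ):ℂ)^2 = (((Real.sqrt 2 * Real.sqrt 2 :ℝ)):ℂ) by push_cast; ring,
    Real.mul_self_sqrt (by norm_num)]; norm_num

lemma c4 : (((Real.sqrt 2 : ℝ)) : ℂ)^4 = 4 := by
  rw [show (4:ℕ) = 2*2 from rfl, pow_mul, c2]; norm_num

lemma Bm_herm (t : ℝ) : (Bm t).IsHermitian := by
  ext ⟨i,a⟩ ⟨j,b⟩
  fin_cases i <;> fin_cases a <;> fin_cases j <;> fin_cases b <;>
    simp [Bm, Matrix.conjTranspose_apply]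

lemma Bm_sq_sq (t : ℝ) :
    (Bm t * Bm t) * (Bm t * Bm t) + ((t^2/4 : ℝ) : ℂ) • (1 : M4)
      = ((t^2 + 1 : ℝ) : ℂ) • (Bm t * Bm t) := by
  have : Bm t * Bm t = Matrix.of fun p q =>
    ![![![![((t^2+1/2 : ℝ):ℂ), 0], ![1/2, t/2]],
       ![![0, ((t^2+1/2 : ℝ):ℂ)], ![-(t:ℂ)/2, 1/2]]],
      ![![![1/2, -(t:ℂ)/2], ![1/2, 0]],
       ![![(t:ℂ)/2, 1/2], ![0, 1/2]]]] p.1 p.2 q.1 q.2 := by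
    ext ⟨i,a⟩ ⟨j,b⟩
    fin_cases i <;> fin_cases a <;> fin_cases j <;> fin_cases b <;>
      simp [Bm, Matrix.mul_apply, Fintype.sum_prod_type, Fin.sum_univ_two, Matrix.of_apply,
        Matrix.cons_val_zero, Matrix.cons_val_one, Matrix.head_cons] <;>
      push_cast <;> ring
  rw [this]
  ext ⟨i,a⟩ ⟨j,b⟩
  fin_cases i <;> fin_cases a <;> fin_cases j <;> fin_cases b <;>
    simp [Matrix.mul_apply, Fintype.sum_prod_type, Fin.sum_univ_two, Matrix.one_apply,
      Prod.ext_iff, Fin.ext_iff] <;>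
    push_cast <;> ring

lemma Bm_tr (t : ℝ) : (Bm t * Bm t).trace = ((2*t^2 + 2 : ℝ) : ℂ) := by
  simp [Matrix.trace, Fintype.sum_prod_type, Fin.sum_univ_two, Bm, Matrix.mul_apply]
  push_cast; ring

lemma Bm_tr0 (t : ℝ) : (Bm t).trace = 0 := by
  simp [Matrix.trace, Fintype.sum_prod_type, Fin.sum_univ_two, Bm]

lemma hA1 (γ : ℝ) (hγ : 2 ≤ γ) : rt0p γ - rt1m γ = (((1+γ)⁻¹ : ℝ) : ℂ) • Bm γ := by
  have hne : (1 + γ : ℝ) ≠ 0 := by linarith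
  have hnec : ((1 + γ : ℝ) : ℂ) ≠ 0 := by exact_mod_cast hne
  ext ⟨i,a⟩ ⟨j,b⟩
  fin_cases i <;> fin_cases a <;> fin_cases j <;> fin_cases b <;>
    · simp [rt0p, rt1m, Bm, proj, outer, ket0, ket1, ketP, ketM, Matrix.kroneckerMap_apply,
        Complex.conj_ofReal, sq2c]
      try push_cast
      try field_simp
      try ring_nf
      try simp [inv_pow, c2, c4]
      try field_simp
      try ring

lemma hA2 (γ : ℝ) (hγ : 2 ≤ γ) : rt1p γ - rt0m γ = (((1+γ)⁻¹ : ℝ) : ℂ) • Bm (-γ) := by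
  have hne : (1 + γ : ℝ) ≠ 0 := by linarith
  have hnec : ((1 + γ : ℝ) : ℂ) ≠ 0 := by exact_mod_cast hne
  ext ⟨i,a⟩ ⟨j,b⟩
  fin_cases i <;> fin_cases a <;> fin_cases j <;> fin_cases b <;>
    · simp [rt1p, rt0m, Bm, proj, outer, ket0, ket1, ketP, ketM, Matrix.kroneckerMap_apply,
        Complex.conj_ofReal, sq2c]
      try push_cast
      try field_simp
      try ring_nf
      try simp [inv_pow, c2, c4]
      try field_simp
      try ring

lemma psd_smul {M : M4} (hM : M.PosSemidef) {r : ℝ} (hr : 0 ≤ r) :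
    (((r : ℝ) : ℂ) • M).PosSemidef := by
  constructor
  · unfold Matrix.IsHermitian
    rw [Matrix.conjTranspose_smul, hM.1.eq]
    simp [Complex.conj_ofReal]
  · intro x
    have h1 : (0:ℂ) ≤ (r:ℂ) := by exact Complex.zero_le_real.2 hr
    exact (hM.smul h1).2 x

lemma tr_rt0p (γ : ℝ) (hγ : 2 ≤ γ) : (rt0p γ).trace = 1 := by
  have hne : (1 + γ : ℝ) ≠ 0 := by linarith
  have hnec : ((1 + γ : ℝ) : ℂ) ≠ 0 := by exact_mod_cast hne
  simp [rt0p, Matrix.trace, Fintype.sum_prod_type, Fin.sum_univ_two, proj, outer,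
    ket0, ket1, ketP, ketM, Complex.conj_ofReal, sq2c, sq2c']
  field_simp
  ring

lemma tr_rt1m (γ : ℝ) (hγ : 2 ≤ γ) : (rt1m γ).trace = 1 := by
  have hne : (1 + γ : ℝ) ≠ 0 := by linarith
  have hnec : ((1 + γ : ℝ) : ℂ) ≠ 0 := by exact_mod_cast hne
  simp [rt1m, Matrix.trace, Fintype.sum_prod_type, Fin.sum_univ_two, proj, outer,
    ket0, ket1, ketP, ketM, Complex.conj_ofReal, sq2c, sq2c']
  field_simp
  ring

lemma tr_rt0m (γ : ℝ) (hγ : 2 ≤ γ) : (rt0m γ).trace = 1 := by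
  have hne : (1 + γ : ℝ) ≠ 0 := by linarith
  have hnec : ((1 + γ : ℝ) : ℂ) ≠ 0 := by exact_mod_cast hne
  simp [rt0m, Matrix.trace, Fintype.sum_prod_type, Fin.sum_univ_two, proj, outer,
    ket0, ket1, ketP, ketM, Complex.conj_ofReal, sq2c, sq2c']
  field_simp
  ring

lemma key (γ t : ℝ) (hγ : 2 ≤ γ) (ht : t^2 = γ^2) (A P N : M4)
    (hA : A = (((1+γ)⁻¹ : ℝ) : ℂ) • Bm t) (hsp : IsSpectralPair A P N) :
    (A * P).trace = ((Real.sqrt (1+γ+γ^2) / (1+γ) : ℝ) : ℂ) := by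
  obtain ⟨hP, hN, hPP, hNN, hPN, hcomm, hpos1, hpos2, hker⟩ := hsp
  have h1γ : (0:ℝ) < 1 + γ := by linarith
  set s : ℝ := Real.sqrt (1+γ+γ^2) with hs
  have hsnn : (0:ℝ) ≤ 1+γ+γ^2 := by nlinarith
  have hs2 : s^2 = 1+γ+γ^2 := Real.sq_sqrt hsnn
  have hs0 : (0:ℝ) < s := Real.sqrt_pos.2 (by nlinarith)
  set S : M4 := (((1+γ)⁻¹ / s : ℝ) : ℂ) • (Bm t * Bm t + ((γ/2 : ℝ) : ℂ) • 1) with hSdef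
  -- S is PSD
  have hBB : (Bm t * Bm t).PosSemidef := by
    have := Matrix.posSemidef_conjTranspose_mul_self (Bm t)
    rwa [(Bm_herm t).eq] at this
  have hSpsd : S.PosSemidef := by
    refine psd_smul ?_ ?_
    · exact hBB.add (psd_smul Matrix.PosSemidef.one (by linarith : (0:ℝ) ≤ γ/2))
    · positivity
  -- S * S = A * A
  have expand : ∀ (X : M4) (g : ℂ), (X + g•1)*(X+g•1) = X*X + (2*g)•X + (g*g)•1 := by
    intro X g
    simp only [add_mul, mul_add, Matrix.smul_mul, Matrix.mul_smul, one_mul, mul_one, smul_smul]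
    rw [two_mul, add_smul]
    abel
  have h4 : (Bm t * Bm t) * (Bm t * Bm t)
      = ((t^2 + 1 : ℝ) : ℂ) • (Bm t * Bm t) - ((t^2/4 : ℝ) : ℂ) • (1 : M4) := by
    rw [eq_sub_iff_add_eq]; exact Bm_sq_sq t
  have e1 : (2 : ℂ) * ((γ/2 : ℝ) : ℂ) = ((γ : ℝ) : ℂ) := by push_cast; ring
  have e2 : ((γ/2 : ℝ) : ℂ) * ((γ/2 : ℝ) : ℂ) = ((γ^2/4 : ℝ) : ℂ) := by push_cast; ring
  have inner : (Bm t * Bm t + ((γ/2 : ℝ) : ℂ) • 1) * (Bm t * Bm t + ((γ/2 : ℝ) : ℂ) • 1)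
      = ((γ^2 + γ + 1 : ℝ) : ℂ) • (Bm t * Bm t) := by
    rw [expand, h4, ht, e1, e2]
    push_cast
    module
  have hS2 : S * S = A * A := by
    rw [hSdef, hA, Matrix.smul_mul, Matrix.mul_smul, smul_smul,
      Matrix.smul_mul, Matrix.mul_smul, smul_smul, inner, smul_smul]
    congr 1
    have hr : ((1+γ:ℝ))⁻¹ / s * ((1+γ)⁻¹ / s) * (γ^2 + γ + 1) = (1+γ)⁻¹ * (1+γ)⁻¹ := by
      field_simp
      nlinarith [hs2]
    calc (((1+γ)⁻¹ / s : ℝ) : ℂ) * (((1+γ)⁻¹ / s : ℝ) : ℂ) * ((γ^2 + γ + 1 : ℝ) : ℂ)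
        = ((((1+γ)⁻¹ / s) * ((1+γ)⁻¹ / s) * (γ^2 + γ + 1) : ℝ) : ℂ) := by push_cast; ring
      _ = ((((1+γ)⁻¹ * (1+γ)⁻¹ : ℝ)) : ℂ) := by rw [hr]
      _ = (((1+γ)⁻¹ : ℝ) : ℂ) * (((1+γ)⁻¹ : ℝ) : ℂ) := by push_cast; ring
  -- D = S
  set D : M4 := A * P + (-A) * N with hDdef
  have hDpsd : D.PosSemidef := hpos1.add hpos2
  have hNe : N = 1 - P := by rw [← hPN]; abel
  have hD' : D = A * (P - N) := by rw [hDdef, neg_mul, mul_sub]; abel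
  have hcomm' : (P - N) * A = A * (P - N) := by
    rw [hNe, sub_mul, mul_sub, sub_mul, mul_sub, one_mul, mul_one, hcomm]
  have hPN1 : (P - N) * (P - N) = 1 := by
    rw [hNe]
    simp only [mul_sub, sub_mul, mul_add, add_mul, mul_one, one_mul, hPP]
    abel
  have hDD : D * D = A * A := by
    rw [hD', mul_assoc, ← mul_assoc (P - N), hcomm', mul_assoc, hPN1, mul_one]
  have hDS : D = S := by
    open scoped MatrixOrder in
    have := congrArg CFC.sqrt (show D ^ 2 = S ^ 2 by rw [pow_two, pow_two, hDD, hS2])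
    open scoped MatrixOrder in
    rwa [CFC.sqrt_sq D hDpsd.nonneg, CFC.sqrt_sq S hSpsd.nonneg] at this
  -- traces
  have htrA : A.trace = 0 := by rw [hA, Matrix.trace_smul, Bm_tr0, smul_zero]
  have htrsum : (A * P).trace + (A * N).trace = 0 := by
    rw [← Matrix.trace_add, ← mul_add, hPN, mul_one, htrA]
  have htrD : D.trace = (A * P).trace - (A * N).trace := by
    rw [hDdef, Matrix.trace_add, neg_mul, Matrix.trace_neg]; ring
  have htrS : S.trace = ((2 * s / (1+γ) : ℝ) : ℂ) := by
    rw [hSdef, Matrix.trace_smul, Matrix.trace_add, Matrix.trace_smul, Bm_tr,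
      Matrix.trace_one]
    have hcard : (Fintype.card (Fin 2 × Fin 2) : ℂ) = 4 := by simp
    rw [hcard]
    have : ((1+γ)⁻¹ / s) * ( 2*t^2 + 2 + (γ/2) * 4) = 2 * s / (1+γ) := by
      have ht2 : t^2 = γ^2 := ht
      field_simp [ht2]
      nlinarith [hs2]
    calc (((1+γ)⁻¹ / s : ℝ) : ℂ) • (((2*t^2+2 : ℝ) : ℂ) + ((γ/2 : ℝ) : ℂ) * 4)
        = ((((1+γ)⁻¹ / s) * (2*t^2 + 2 + (γ/2) * 4) : ℝ) : ℂ) := by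
          rw [smul_eq_mul]; push_cast; ring
      _ = ((2 * s / (1+γ) : ℝ) : ℂ) := by rw [this]
  have hTN : (A * N).trace = -((A * P).trace) := by linear_combination htrsum
  have h2T : D.trace = 2 * (A * P).trace := by rw [htrD, hTN]; ring
  have h3 : 2 * (A * P).trace = ((2 * s / (1+γ) : ℝ) : ℂ) := by
    rw [← h2T, hDS, htrS]
  have hc : ((2 * s / (1+γ) : ℝ) : ℂ) = 2 * ((s / (1+γ) : ℝ) : ℂ) := by push_cast; ring
  rw [hc] at h3
  linear_combination h3 / 2

/-- the POVM Mω = (1/2)Πω built from the Helstrom projections achieves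
success probability (1/4)(1 + √(1+γ+γ²)/(1+γ)) on the equiprobable average states. -/
theorem stmt_16 (γ : ℝ) (hγ : 2 ≤ γ)
    (P0p P1m P1p P0m : M4)
    (h1 : IsSpectralPair (rt0p γ - rt1m γ) P0p P1m)
    (h2 : IsSpectralPair (rt1p γ - rt0m γ) P1p P0m) :
    (1/4 : ℂ) * (rt0p γ * ((1/2 : ℂ) • P0p)).trace
      + (1/4 : ℂ) * (rt1m γ * ((1/2 : ℂ) • P1m)).trace
      + (1/4 : ℂ) * (rt1p γ * ((1/2 : ℂ) • P1p)).trace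
      + (1/4 : ℂ) * (rt0m γ * ((1/2 : ℂ) • P0m)).trace
      = (((1/4) * (1 + Real.sqrt (1 + γ + γ^2) / (1 + γ)) : ℝ) : ℂ) := by
  have k1 := key γ γ hγ rfl _ P0p P1m (hA1 γ hγ) h1
  have k2 := key γ (-γ) hγ (by ring) _ P1p P0m (hA2 γ hγ) h2
  have hPN1 : P0p + P1m = 1 := h1.2.2.2.2.1
  have hPN2 : P1p + P0m = 1 := h2.2.2.2.2.1
  have hP1m : P1m = 1 - P0p := by rw [← hPN1]; abel
  have hP0m : P0m = 1 - P1p := by rw [← hPN2]; abel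
  have e1 : (rt0p γ * P0p).trace - (rt1m γ * P0p).trace
      = ((Real.sqrt (1+γ+γ^2)/(1+γ) : ℝ) : ℂ) := by
    rw [← Matrix.trace_sub, ← Matrix.sub_mul]; exact k1
  have e2 : (rt1p γ * P1p).trace - (rt0m γ * P1p).trace
      = ((Real.sqrt (1+γ+γ^2)/(1+γ) : ℝ) : ℂ) := by
    rw [← Matrix.trace_sub, ← Matrix.sub_mul]; exact k2
  have hr : (((1/4) * (1 + Real.sqrt (1+γ+γ^2) / (1+γ)) : ℝ) : ℂ)
      = 1/4 * (1 + ((Real.sqrt (1+γ+γ^2)/(1+γ) : ℝ) : ℂ)) := by push_cast; ring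
  simp only [Matrix.mul_smul, Matrix.trace_smul, smul_eq_mul]
  rw [hP1m, hP0m]
  simp only [Matrix.mul_sub, Matrix.mul_one, Matrix.trace_sub, mul_sub, mul_one,
    Matrix.trace_sub, tr_rt1m γ hγ, tr_rt0m γ hγ]
  rw [hr]
  linear_combination e1/8 + e2/8
end
end
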